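/- arXiv:1910.08541 — 4 statements merged into one kernel-verified Lean document; each statement's English description precedes it below -/
import Mathlib

section
/- Let β : Fin K → EuclideanSpace ℂ (Fin N) be an orthonormal family, let g : Fin K → Fin M → ℂ, and let p > 0. Then p · ∑_{k} (∑_{m} |g_{k,m}|)² is the greatest element of the set of values |∑_{k} (∑_{m} exp(i θ_{k,m}) · g_{k,m}) · ⟪β_k, w⟫|² as θ ranges over all phase configurations θ : Fin K → Fin M → ℝ and w ranges over vectors in EuclideanSpace ℂ (Fin N) with ‖w‖² ≤ p. -/
set_option maxHeartbeats 1000000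

open Complex Finset

/-- Main deterministic joint beamforming result: for `K` IRSs with orthonormal
base-station steering vectors `β k` and cascaded channels `g k`, the maximal receive
power over continuous phase shifts `θ` and beamformers `w` with `‖w‖² ≤ p` equals
`p * ∑ k, (∑ m, |g k m|)²`. -/
theorem joint_beamforming_optimal_value (K N M : ℕ)
    (β : Fin K → EuclideanSpace ℂ (Fin N)) (hβ : Orthonormal ℂ β)
    (g : Fin K → Fin M → ℂ) (p : ℝ) (hp : 0 < p) :
    IsGreatest
      {x : ℝ | ∃ θ : Fin K → Fin M → ℝ, ∃ w : EuclideanSpace ℂ (Fin N),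
        ‖w‖ ^ 2 ≤ p ∧
        x = ‖∑ k,
              (∑ m, Complex.exp ((θ k m : ℂ) * Complex.I) * g k m)
                * (inner ℂ (β k) w : ℂ)‖ ^ 2}
      (p * ∑ k, (∑ m, ‖g k m‖) ^ 2) := by
  classical
  set c : Fin K → ℝ := fun k => ∑ m, ‖g k m‖ with hc
  have hc0 : ∀ k, 0 ≤ c k := fun k => Finset.sum_nonneg fun m _ => (norm_nonneg _)
  set S : ℝ := ∑ k, c k ^ 2 with hS
  have hS0 : 0 ≤ S := Finset.sum_nonneg fun k _ => sq_nonneg _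
  constructor
  · -- membership
    by_cases hSz : S = 0
    · refine ⟨fun _ _ => 0, 0, by simpa using hp.le, ?_⟩
      simp only [inner_zero_right, mul_zero, Finset.sum_const_zero, map_zero, norm_zero]
      rw [zero_pow (by norm_num), mul_eq_zero]
      right; exact hSz
    · have hSpos : 0 < S := lt_of_le_of_ne hS0 (Ne.symm hSz)
      set r : ℝ := Real.sqrt (p / S) with hr
      refine ⟨fun k m => -(g k m).arg,
        (r : ℂ) • ∑ k, (c k : ℂ) • β k, ?_, ?_⟩
      · have hnorm : ‖∑ k, (c k : ℂ) • β k‖ ^ 2 = S := by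
          have := @norm_sq_eq_re_inner ℂ _ _ _ _ (∑ k, (c k : ℂ) • β k)
          rw [this, sum_inner]
          simp only [inner_smul_left, hβ.inner_right_fintype]
          push_cast
          simp only [Complex.conj_ofReal]
          norm_cast
          simp [hS, sq]
        rw [norm_smul]
        have : ‖(r:ℂ)‖ = r := by
          simp [hr, Complex.norm_real, Real.sqrt_nonneg, _root_.abs_of_nonneg]
        rw [this, mul_pow, hnorm, hr, Real.sq_sqrt (by positivity)]
        rw [div_mul_cancel₀ _ hSz]
      · have hterm : ∀ k m, Complex.exp ((↑(-(g k m).arg) : ℂ) * Complex.I) * g k m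
            = (‖g k m‖ : ℂ) := by
          intro k m
          rw [Complex.ofReal_neg, neg_mul, Complex.exp_neg,
            inv_mul_eq_iff_eq_mul₀ (Complex.exp_ne_zero _), mul_comm,
            Complex.norm_mul_exp_arg_mul_I]
        have hinner : ∀ k, (inner ℂ (β k) ((r : ℂ) • ∑ j, (c j : ℂ) • β j) : ℂ)
            = (r : ℂ) * (c k : ℂ) := by
          intro k
          rw [inner_smul_right, hβ.inner_right_fintype]
        simp only [hterm, hinner]
        have : (∑ k, (∑ m, (‖g k m‖ : ℂ)) * ((r:ℂ) * (c k : ℂ)))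
            = ((r * S : ℝ) : ℂ) := by
          simp only [hS, hc]
          push_cast
          rw [Finset.mul_sum]
          refine Finset.sum_congr rfl fun k _ => ?_
          ring
        rw [this, Complex.norm_real, Real.norm_eq_abs,
          _root_.abs_of_nonneg (by positivity), mul_pow, hr,
          Real.sq_sqrt (by positivity)]
        field_simp
  · -- upper bound
    rintro x ⟨θ, w, hw, rfl⟩
    set b : Fin K → ℝ := fun k => ‖(inner ℂ (β k) w : ℂ)‖ with hb
    have habs : ‖∑ k, (∑ m, Complex.exp ((θ k m : ℂ) * Complex.I) * g k m)
          * (inner ℂ (β k) w : ℂ)‖ ≤ ∑ k, c k * b k := by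
      refine le_trans (norm_sum_le _ _) (Finset.sum_le_sum fun k _ => ?_)
      rw [norm_mul]
      refine mul_le_mul_of_nonneg_right ?_ (norm_nonneg _)
      refine le_trans (norm_sum_le _ _) (le_of_eq ?_)
      refine Finset.sum_congr rfl fun m _ => ?_
      rw [norm_mul, Complex.norm_exp_ofReal_mul_I, one_mul]
    have h1 : ‖∑ k, (∑ m, Complex.exp ((θ k m : ℂ) * Complex.I) * g k m)
          * (inner ℂ (β k) w : ℂ)‖ ^ 2 ≤ (∑ k, c k * b k) ^ 2 := by
      apply pow_le_pow_left₀ (norm_nonneg _) habs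
    refine h1.trans ?_
    have h2 := Finset.sum_mul_sq_le_sq_mul_sq Finset.univ c b
    have h3 : ∑ k, b k ^ 2 ≤ ‖w‖ ^ 2 := hβ.sum_inner_products_le w
    calc (∑ k, c k * b k) ^ 2 ≤ (∑ k, c k ^ 2) * (∑ k, b k ^ 2) := h2
      _ ≤ S * p := by
          exact mul_le_mul_of_nonneg_left (h3.trans hw) hS0
      _ = p * S := mul_comm _ _
end

section
/- Let δ > 0 and let c : Fin M → ℝ. Let μ be the product measure on (Fin M → ℝ) whose factors are the uniform probability measure on [−δ, δ]. Then ∫ |∑_{m} c_m · exp(i Δ_m)|² dμ(Δ) = ∑_{m} c_m² + (sin δ / δ)² · ∑_{m} ∑_{i ≠ m} c_m · c_i. -/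
open Real Complex Finset MeasureTheory


noncomputable def unif (δ : ℝ) : Measure ℝ :=
  (ENNReal.ofReal (2 * δ))⁻¹ • volume.restrict (Set.Icc (-δ) δ)

lemma unif_prob (δ : ℝ) (hδ : 0 < δ) : IsProbabilityMeasure (unif δ) := by
  constructor
  rw [unif, Measure.smul_apply, Measure.restrict_apply MeasurableSet.univ, Set.univ_inter,
    Real.volume_Icc]
  rw [show δ - -δ = 2 * δ by ring, smul_eq_mul,
    ENNReal.inv_mul_cancel (by simp [hδ]) ENNReal.ofReal_ne_top]

lemma integral_exp_unif (δ : ℝ) (hδ : 0 < δ) :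
    ∫ x, Complex.exp (x * Complex.I) ∂(unif δ) = (Real.sin δ / δ : ℝ) := by
  rw [unif, integral_smul_measure]
  rw [show ∫ x in Set.Icc (-δ) δ, Complex.exp (x * Complex.I)
      = ∫ x in (-δ)..δ, Complex.exp (x * Complex.I) by
    rw [intervalIntegral.integral_of_le (by linarith), ← integral_Icc_eq_integral_Ioc]]
  have : ∫ x in (-δ)..δ, Complex.exp (x * Complex.I)
      = ((∫ x in (-δ)..δ, Real.cos x : ℝ) : ℂ) + ((∫ x in (-δ)..δ, Real.sin x : ℝ) : ℂ) * Complex.I := by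
    rw [← intervalIntegral.integral_ofReal, ← intervalIntegral.integral_ofReal,
      ← intervalIntegral.integral_mul_const, ← intervalIntegral.integral_add]
    · refine intervalIntegral.integral_congr fun x _ => ?_
      rw [Complex.exp_mul_I]
      push_cast
      ring
    · exact (Complex.continuous_ofReal.comp Real.continuous_cos).intervalIntegrable _ _
    · exact ((Complex.continuous_ofReal.comp Real.continuous_sin).mul continuous_const).intervalIntegrable _ _
  rw [this, integral_cos, integral_sin]
  simp only [Real.sin_neg, Real.cos_neg]
  rw [show Real.sin δ - -Real.sin δ = 2 * Real.sin δ by ring, sub_self]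
  rw [ENNReal.toReal_inv, ENNReal.toReal_ofReal (by linarith)]
  push_cast
  rw [zero_mul, add_zero, Complex.real_smul]
  have hδ' : (δ:ℂ) ≠ 0 := Complex.ofReal_ne_zero.2 hδ.ne'
  push_cast
  field_simp

lemma integral_exp_neg_unif (δ : ℝ) (hδ : 0 < δ) :
    ∫ x, Complex.exp (-(x * Complex.I)) ∂(unif δ) = (Real.sin δ / δ : ℝ) := by
  have h : ∀ x : ℝ, Complex.exp (-(x * Complex.I)) = starRingEnd ℂ (Complex.exp (x * Complex.I)) := by
    intro x
    rw [← Complex.exp_conj]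
    simp
  simp_rw [h]
  rw [integral_conj, integral_exp_unif δ hδ, Complex.conj_ofReal]

lemma pi_fubini {ι : Type*} [Fintype ι] (μ : Measure ℝ) [SigmaFinite μ] (f : ι → ℝ → ℂ) :
    ∫ x : ι → ℝ, ∏ i, f i (x i) ∂(Measure.pi fun _ => μ) = ∏ i, ∫ x, f i x ∂μ := by
  letI : MeasureSpace ℝ := ⟨μ⟩
  exact MeasureTheory.integral_fintype_prod_eq_prod f

lemma pair_integral (M : ℕ) (δ : ℝ) (hδ : 0 < δ) (m i : Fin M) :
    ∫ Δ : Fin M → ℝ, Complex.exp ((Δ m : ℂ) * Complex.I) * Complex.exp (-((Δ i : ℂ) * Complex.I))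
        ∂(Measure.pi fun _ => unif δ)
      = if m = i then 1 else (((Real.sin δ / δ : ℝ)) : ℂ) ^ 2 := by
  haveI := unif_prob δ hδ
  by_cases hmi : m = i
  · subst hmi
    simp_rw [← Complex.exp_add, add_neg_cancel, Complex.exp_zero]
    simp
  · rw [if_neg hmi]
    set f : Fin M → ℝ → ℂ := fun k =>
      if k = m then (fun x : ℝ => Complex.exp ((x : ℂ) * Complex.I))
      else if k = i then (fun x : ℝ => Complex.exp (-((x : ℂ) * Complex.I)))
      else fun _ => 1 with hf
    have hpt : ∀ Δ : Fin M → ℝ,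
        Complex.exp ((Δ m : ℂ) * Complex.I) * Complex.exp (-((Δ i : ℂ) * Complex.I))
          = ∏ k, f k (Δ k) := by
      intro Δ
      rw [← Finset.mul_prod_erase univ _ (Finset.mem_univ m),
        ← Finset.mul_prod_erase _ _ (Finset.mem_erase.2 ⟨Ne.symm hmi, Finset.mem_univ i⟩),
        Finset.prod_eq_one (fun k hk => by
          simp only [Finset.mem_erase] at hk
          simp [hf, hk.1, hk.2.1])]
      simp [hf, Ne.symm hmi]
    simp_rw [hpt]
    rw [pi_fubini]
    rw [← Finset.mul_prod_erase univ _ (Finset.mem_univ m),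
      ← Finset.mul_prod_erase _ _ (Finset.mem_erase.2 ⟨Ne.symm hmi, Finset.mem_univ i⟩),
      Finset.prod_eq_one (fun k hk => by
        simp only [Finset.mem_erase] at hk
        simp [hf, hk.1, hk.2.1])]
    have h1 : ∫ x, f m x ∂(unif δ) = ((Real.sin δ / δ : ℝ) : ℂ) := by
      simp only [hf, if_pos rfl]
      exact integral_exp_unif δ hδ
    have h2 : ∫ x, f i x ∂(unif δ) = ((Real.sin δ / δ : ℝ) : ℂ) := by
      simp only [hf, if_neg (Ne.symm hmi), if_pos rfl]
      exact integral_exp_neg_unif δ hδ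
    rw [h1, h2]
    ring

/-- Expected receive power with independent uniform phase errors: for `Δ_m` i.i.d.
uniform on `[-δ, δ]` and real magnitudes `c_m`,
`E |∑ m, c m · exp(i Δ m)|² = ∑ m, c m ² + (sin δ / δ)² · ∑_{m} ∑_{i ≠ m} c m · c i`. -/
theorem expected_power_uniform_phase_errors (M : ℕ) (δ : ℝ) (hδ : 0 < δ)
    (c : Fin M → ℝ) :
    (∫ Δ : Fin M → ℝ,
        ‖∑ m, (c m : ℂ) * Complex.exp ((Δ m : ℂ) * Complex.I)‖ ^ 2
      ∂(Measure.pi fun _ : Fin M =>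
          (ENNReal.ofReal (2 * δ))⁻¹ • volume.restrict (Set.Icc (-δ) δ)))
      = ∑ m, c m ^ 2
        + (Real.sin δ / δ) ^ 2 * ∑ m, ∑ i ∈ Finset.univ.erase m, c m * c i := by
  haveI := unif_prob δ hδ
  have hmeas : (Measure.pi fun _ : Fin M =>
      (ENNReal.ofReal (2 * δ))⁻¹ • volume.restrict (Set.Icc (-δ) δ))
      = Measure.pi fun _ : Fin M => unif δ := rfl
  rw [hmeas]
  set P := Measure.pi fun _ : Fin M => unif δ with hP
  set s : ℝ := Real.sin δ / δ with hs
  set g : Fin M → Fin M → (Fin M → ℝ) → ℂ := fun m i Δ =>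
    ((c m * c i : ℝ) : ℂ) *
      (Complex.exp ((Δ m : ℂ) * Complex.I) * Complex.exp (-((Δ i : ℂ) * Complex.I))) with hg
  have hgInt : ∀ m i : Fin M, Integrable (g m i) P := by
    intro m i
    refine (integrable_const (|c m * c i|)).mono' ?_ ?_
    · refine Continuous.aestronglyMeasurable ?_
      fun_prop
    · filter_upwards with Δ
      simp [hg, Complex.norm_exp, abs_mul]
  have habs : ∀ Δ : Fin M → ℝ,
      ‖∑ m, (c m : ℂ) * Complex.exp ((Δ m : ℂ) * Complex.I)‖ ^ 2
        = (∑ m, ∑ i, g m i Δ).re := by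
    intro Δ
    have hz : ((∑ m, (c m : ℂ) * Complex.exp ((Δ m : ℂ) * Complex.I)) *
        starRingEnd ℂ (∑ m, (c m : ℂ) * Complex.exp ((Δ m : ℂ) * Complex.I))).re
        = Complex.normSq (∑ m, (c m : ℂ) * Complex.exp ((Δ m : ℂ) * Complex.I)) := by
      rw [Complex.mul_conj]
      exact Complex.ofReal_re _
    rw [Complex.sq_norm, ← hz]
    congr 1
    rw [map_sum, Finset.sum_mul_sum]
    refine Finset.sum_congr rfl fun m _ => Finset.sum_congr rfl fun i _ => ?_
    rw [hg]
    simp only [map_mul, Complex.conj_ofReal, ← Complex.exp_conj, map_neg, Complex.conj_I]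
    push_cast
    ring_nf
  simp_rw [habs]
  simp_rw [← RCLike.re_to_complex]
  rw [integral_re (integrable_finset_sum _ fun m _ => integrable_finset_sum _ fun i _ => hgInt m i)]
  rw [RCLike.re_to_complex]
  rw [integral_finset_sum _ (fun m _ => integrable_finset_sum _ fun i _ => hgInt m i)]
  have key : ∀ m : Fin M, ∫ Δ, ∑ i, g m i Δ ∂P
      = ((c m ^ 2 + s ^ 2 * ∑ i ∈ Finset.univ.erase m, c m * c i : ℝ) : ℂ) := by
    intro m
    rw [integral_finset_sum _ fun i _ => hgInt m i]
    have : ∀ i : Fin M, ∫ Δ, g m i Δ ∂P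
        = ((c m * c i : ℝ) : ℂ) * (if m = i then 1 else ((s : ℝ) : ℂ) ^ 2) := by
      intro i
      rw [hg]
      simp only
      rw [integral_const_mul, pair_integral M δ hδ m i]
    simp_rw [this]
    rw [← Finset.add_sum_erase _ _ (Finset.mem_univ m), if_pos rfl,
      Finset.sum_congr rfl (fun i hi => by
        rw [if_neg (Ne.symm (Finset.mem_erase.1 hi).1)])]
    push_cast
    rw [Finset.mul_sum]
    congr 1
    · ring
    · exact Finset.sum_congr rfl fun i _ => by ring
  simp_rw [key]
  rw [← Complex.ofReal_sum, Complex.ofReal_re, Finset.sum_add_distrib, Finset.mul_sum]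
end

section
/- Let β : Fin K → EuclideanSpace ℂ (Fin N) be an orthonormal family, let δ > 0, and let c : Fin K → Fin M → ℝ. Let μ be the product measure on (Fin K → Fin M → ℝ) whose factors are the uniform probability measure on [−δ, δ]. Then ∫ ‖∑_{k} (∑_{m} c_{k,m} · exp(i Δ_{k,m})) • β_k‖² dμ(Δ) = ∑_{k} ( ∑_{m} c_{k,m}² + (sin δ / δ)² · ∑_{m} ∑_{i ≠ m} c_{k,m} · c_{k,i} ). -/
open Real Complex Finset MeasureTheory

section helpers

variable {E : Type*} [MeasurableSpace E]

lemma my_integral_pi_prod {ι : Type*} [Fintype ι] (μ : Measure E) [SigmaFinite μ]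
    (f : ι → E → ℝ) :
    ∫ x : ι → E, ∏ i, f i (x i) ∂(Measure.pi fun _ => μ) = ∏ i, ∫ x, f i x ∂μ := by
  letI : MeasureSpace E := ⟨μ⟩
  haveI : SigmaFinite (volume : Measure E) := ‹_›
  exact MeasureTheory.integral_fintype_prod_eq_prod f

lemma my_integrable_pi_prod {ι : Type*} [Fintype ι] (μ : Measure E) [SigmaFinite μ]
    {f : ι → E → ℝ} (hf : ∀ i, Integrable (f i) μ) :
    Integrable (fun x : ι → E => ∏ i, f i (x i)) (Measure.pi fun _ => μ) := by
  letI : MeasureSpace E := ⟨μ⟩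
  haveI : SigmaFinite (volume : Measure E) := ‹_›
  exact MeasureTheory.Integrable.fintype_prod hf

lemma my_prod_two {ι : Type*} [Fintype ι] [DecidableEq ι] {m j : ι} (hmj : m ≠ j) (A B : ι → ℝ) :
    ∏ i, (if i = m then A i else if i = j then B i else 1) = A m * B j := by
  rw [← Finset.mul_prod_erase Finset.univ _ (Finset.mem_univ m)]
  rw [← Finset.mul_prod_erase _ _ (Finset.mem_erase.2 ⟨hmj.symm, Finset.mem_univ j⟩)]
  rw [if_pos rfl, if_neg hmj.symm, if_pos rfl]
  rw [Finset.prod_eq_one, mul_one]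
  intro i hi
  simp only [Finset.mem_erase] at hi
  rw [if_neg hi.2.1, if_neg hi.1]

lemma my_prod_one {ι : Type*} [Fintype ι] [DecidableEq ι] (m : ι) (A : ι → ℝ) :
    ∏ i, (if i = m then A i else 1) = A m := by
  simp [Finset.prod_ite_eq']

lemma my_integral_eval_two {ι : Type*} [Fintype ι] [DecidableEq ι] (μ : Measure E)
    [IsProbabilityMeasure μ] {m j : ι} (hmj : m ≠ j) (h1 h2 : E → ℝ) :
    ∫ x : ι → E, h1 (x m) * h2 (x j) ∂(Measure.pi fun _ => μ)
      = (∫ x, h1 x ∂μ) * (∫ x, h2 x ∂μ) := by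
  calc ∫ x : ι → E, h1 (x m) * h2 (x j) ∂(Measure.pi fun _ => μ)
      = ∫ x : ι → E, ∏ i, (fun i y => if i = m then h1 y else if i = j then h2 y else 1) i (x i)
          ∂(Measure.pi fun _ => μ) := by
        refine integral_congr_ae (Filter.Eventually.of_forall fun x => ?_)
        exact (my_prod_two hmj (fun i => h1 (x i)) (fun i => h2 (x i))).symm
    _ = ∏ i, ∫ y, (fun i y => if i = m then h1 y else if i = j then h2 y else 1) i y ∂μ :=
        my_integral_pi_prod (ι := ι) μ (fun i y => if i = m then h1 y else if i = j then h2 y else 1)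
    _ = (∫ x, h1 x ∂μ) * (∫ x, h2 x ∂μ) := by
        rw [Finset.prod_congr rfl (fun i _ => show
            (∫ y, (fun i y => if i = m then h1 y else if i = j then h2 y else 1) i y ∂μ)
            = (if i = m then ∫ x, h1 x ∂μ else if i = j then ∫ x, h2 x ∂μ else 1) from by
          by_cases h : i = m
          · simp [h]
          · by_cases h' : i = j <;> simp [h, h', Ne.symm hmj])]
        exact my_prod_two hmj (fun _ => ∫ x, h1 x ∂μ) (fun _ => ∫ x, h2 x ∂μ)

lemma my_integral_eval_one {ι : Type*} [Fintype ι] [DecidableEq ι] (μ : Measure E)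
    [IsProbabilityMeasure μ] (m : ι) (h : E → ℝ) :
    ∫ x : ι → E, h (x m) ∂(Measure.pi fun _ => μ) = ∫ x, h x ∂μ := by
  calc ∫ x : ι → E, h (x m) ∂(Measure.pi fun _ => μ)
      = ∫ x : ι → E, ∏ i, (fun i y => if i = m then h y else 1) i (x i)
          ∂(Measure.pi fun _ => μ) := by
        refine integral_congr_ae (Filter.Eventually.of_forall fun x => ?_)
        exact (my_prod_one m (fun i => h (x i))).symm
    _ = ∏ i, ∫ y, (fun i y => if i = m then h y else 1) i y ∂μ :=
        my_integral_pi_prod (ι := ι) μ (fun i y => if i = m then h y else 1)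
    _ = ∫ x, h x ∂μ := by
        rw [Finset.prod_congr rfl (fun i _ => show
            (∫ y, (fun i y => if i = m then h y else 1) i y ∂μ)
            = (if i = m then ∫ x, h x ∂μ else 1) from by
          by_cases hh : i = m <;> simp [hh])]
        exact my_prod_one m (fun _ => ∫ x, h x ∂μ)

lemma my_integrable_eval_two {ι : Type*} [Fintype ι] [DecidableEq ι] (μ : Measure E)
    [IsProbabilityMeasure μ] {m j : ι} (hmj : m ≠ j) {h1 h2 : E → ℝ}
    (hi1 : Integrable h1 μ) (hi2 : Integrable h2 μ) :
    Integrable (fun x : ι → E => h1 (x m) * h2 (x j)) (Measure.pi fun _ => μ) := by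
  have e : (fun x : ι → E => h1 (x m) * h2 (x j))
      = fun x : ι → E => ∏ i, (fun i y => if i = m then h1 y else if i = j then h2 y else 1) i (x i) := by
    funext x
    exact (my_prod_two hmj (fun i => h1 (x i)) (fun i => h2 (x i))).symm
  rw [e]
  refine my_integrable_pi_prod μ
    (f := fun i y => if i = m then h1 y else if i = j then h2 y else 1) (fun i => ?_)
  by_cases h : i = m
  · simpa [h] using hi1
  · by_cases h' : i = j
    · simpa [h, h', Ne.symm hmj] using hi2
    · simpa [h, h'] using (integrable_const (1:ℝ) (μ := μ))

lemma my_integrable_eval_one {ι : Type*} [Fintype ι] [DecidableEq ι] (μ : Measure E)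
    [IsProbabilityMeasure μ] (m : ι) {h : E → ℝ} (hi : Integrable h μ) :
    Integrable (fun x : ι → E => h (x m)) (Measure.pi fun _ => μ) := by
  have e : (fun x : ι → E => h (x m))
      = fun x : ι → E => ∏ i, (fun i y => if i = m then h y else 1) i (x i) := by
    funext x
    exact (my_prod_one m (fun i => h (x i))).symm
  rw [e]
  refine my_integrable_pi_prod μ (f := fun i y => if i = m then h y else 1) (fun i => ?_)
  by_cases hh : i = m
  · simpa [hh] using hi
  · simpa [hh] using (integrable_const (1:ℝ) (μ := μ))

end helpers

section onedim

variable {δ : ℝ}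

lemma my_prob (hδ : 0 < δ) :
    IsProbabilityMeasure ((ENNReal.ofReal (2 * δ))⁻¹ • volume.restrict (Set.Icc (-δ) δ)) := by
  constructor
  rw [Measure.smul_apply, Measure.restrict_apply MeasurableSet.univ, Set.univ_inter,
    Real.volume_Icc, smul_eq_mul, show δ - -δ = 2 * δ by ring]
  rw [ENNReal.inv_mul_cancel (by simp [hδ]) ENNReal.ofReal_ne_top]

lemma my_int_smul (f : ℝ → ℝ) (hδ : 0 < δ) :
    ∫ x, f x ∂((ENNReal.ofReal (2 * δ))⁻¹ • volume.restrict (Set.Icc (-δ) δ))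
      = (2 * δ)⁻¹ * ∫ x in Set.Icc (-δ) δ, f x := by
  rw [integral_smul_measure, ENNReal.toReal_inv, ENNReal.toReal_ofReal (by linarith), smul_eq_mul]

lemma my_int_cos (hδ : 0 < δ) :
    ∫ x, Real.cos x ∂((ENNReal.ofReal (2 * δ))⁻¹ • volume.restrict (Set.Icc (-δ) δ))
      = Real.sin δ / δ := by
  rw [my_int_smul _ hδ, MeasureTheory.integral_Icc_eq_integral_Ioc,
    ← intervalIntegral.integral_of_le (by linarith), integral_cos, Real.sin_neg]
  field_simp
  ring

lemma my_int_sin (hδ : 0 < δ) :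
    ∫ x, Real.sin x ∂((ENNReal.ofReal (2 * δ))⁻¹ • volume.restrict (Set.Icc (-δ) δ)) = 0 := by
  rw [my_int_smul _ hδ, MeasureTheory.integral_Icc_eq_integral_Ioc,
    ← intervalIntegral.integral_of_le (by linarith), integral_sin, Real.cos_neg]
  ring

lemma my_integrable_smul {f : ℝ → ℝ} (hf : Continuous f) (hδ : 0 < δ) :
    Integrable f ((ENNReal.ofReal (2 * δ))⁻¹ • volume.restrict (Set.Icc (-δ) δ)) := by
  refine Integrable.smul_measure ?_ (by simp [hδ])
  exact hf.integrableOn_Icc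

end onedim

/-- Multi-IRS expected receive power: with orthonormal steering vectors `β k`, fixed
cascaded-channel magnitudes `c k m`, and i.i.d. uniform phase errors `Δ k m` on
`[-δ, δ]`, the expected power decouples across surfaces, each contributing a diagonal
term plus a cross term scaled by `(sin δ / δ)²`. -/
theorem multi_irs_expected_power (K N M : ℕ)
    (β : Fin K → EuclideanSpace ℂ (Fin N)) (hβ : Orthonormal ℂ β)
    (δ : ℝ) (hδ : 0 < δ) (c : Fin K → Fin M → ℝ) :
    (∫ Δ : Fin K → Fin M → ℝ,
        ‖∑ k, ((∑ m, (c k m : ℂ) * Complex.exp ((Δ k m : ℂ) * Complex.I)) • β k)‖ ^ 2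
      ∂(Measure.pi fun _ : Fin K => Measure.pi fun _ : Fin M =>
          (ENNReal.ofReal (2 * δ))⁻¹ • volume.restrict (Set.Icc (-δ) δ)))
      = ∑ k, (∑ m, c k m ^ 2
          + (Real.sin δ / δ) ^ 2 * ∑ m, ∑ i ∈ Finset.univ.erase m, c k m * c k i) := by
  have hμ0 : IsProbabilityMeasure
      ((ENNReal.ofReal (2 * δ))⁻¹ • volume.restrict (Set.Icc (-δ) δ)) := my_prob hδ
  set μ0 : Measure ℝ := (ENNReal.ofReal (2 * δ))⁻¹ • volume.restrict (Set.Icc (-δ) δ) with hμ0def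
  haveI : IsProbabilityMeasure μ0 := hμ0
  set s : ℝ := Real.sin δ / δ with hs
  -- the per-surface integrand
  set g : Fin K → (Fin M → ℝ) → ℝ := fun k x => ∑ m, ∑ j, c k m * c k j *
      (Real.cos (x m) * Real.cos (x j) + Real.sin (x m) * Real.sin (x j)) with hg
  -- pointwise identity
  have hpt : ∀ Δ : Fin K → Fin M → ℝ,
      ‖∑ k, ((∑ m, (c k m : ℂ) * Complex.exp ((Δ k m : ℂ) * Complex.I)) • β k)‖ ^ 2
        = ∑ k, g k (Δ k) := by
    intro Δ
    set a : Fin K → ℂ := fun k => ∑ m, (c k m : ℂ) * Complex.exp ((Δ k m : ℂ) * Complex.I) with ha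
    have h1 : ‖∑ k, a k • β k‖ ^ 2 = ∑ k, ‖a k‖ ^ 2 := by
      rw [@norm_sq_eq_re_inner ℂ]
      rw [hβ.inner_sum a a Finset.univ]
      rw [map_sum]
      refine Finset.sum_congr rfl fun k _ => ?_
      rw [RCLike.conj_mul]
      simp [← Complex.ofReal_pow]
    rw [h1]
    refine Finset.sum_congr rfl fun k _ => ?_
    have hre : (a k).re = ∑ m, c k m * Real.cos (Δ k m) := by
      rw [ha, Complex.re_sum]
      refine Finset.sum_congr rfl fun m _ => ?_
      simp [Complex.exp_ofReal_mul_I_re]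
    have him : (a k).im = ∑ m, c k m * Real.sin (Δ k m) := by
      rw [ha, Complex.im_sum]
      refine Finset.sum_congr rfl fun m _ => ?_
      simp [Complex.exp_ofReal_mul_I_im]
    have hnorm : ‖a k‖ ^ 2 = (a k).re ^ 2 + (a k).im ^ 2 := by
      rw [Complex.sq_norm, Complex.normSq_apply]
      ring
    rw [hnorm, hre, him, hg]
    simp only [pow_two, Finset.sum_mul_sum]
    rw [← Finset.sum_add_distrib]
    refine Finset.sum_congr rfl fun m _ => ?_
    rw [← Finset.sum_add_distrib]
    refine Finset.sum_congr rfl fun j _ => ?_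
    ring
  rw [integral_congr_ae (Filter.Eventually.of_forall hpt)]
  -- integrability of the term functions
  have hterm_int : ∀ (k : Fin K) (m j : Fin M),
      Integrable (fun x : Fin M → ℝ => c k m * c k j *
        (Real.cos (x m) * Real.cos (x j) + Real.sin (x m) * Real.sin (x j)))
        (Measure.pi fun _ => μ0) := by
    intro k m j
    by_cases hmj : m = j
    · subst hmj
      refine Integrable.const_mul ?_ _
      refine Integrable.add ?_ ?_
      · exact my_integrable_eval_one μ0 m
          (h := fun y => Real.cos y * Real.cos y)
          (my_integrable_smul (Real.continuous_cos.mul Real.continuous_cos) hδ)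
      · exact my_integrable_eval_one μ0 m
          (h := fun y => Real.sin y * Real.sin y)
          (my_integrable_smul (Real.continuous_sin.mul Real.continuous_sin) hδ)
    · refine Integrable.const_mul ?_ _
      exact (my_integrable_eval_two μ0 hmj (my_integrable_smul Real.continuous_cos hδ)
          (my_integrable_smul Real.continuous_cos hδ)).add
        (my_integrable_eval_two μ0 hmj (my_integrable_smul Real.continuous_sin hδ)
          (my_integrable_smul Real.continuous_sin hδ))
  have hg_int : ∀ k, Integrable (g k) (Measure.pi fun _ => μ0) := by
    intro k
    rw [hg]
    refine integrable_finset_sum _ fun m _ => integrable_finset_sum _ fun j _ => hterm_int k m j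
  -- value of each inner integral
  have hg_val : ∀ k, ∫ x, g k x ∂(Measure.pi fun _ => μ0)
      = ∑ m, c k m ^ 2 + s ^ 2 * ∑ m, ∑ i ∈ Finset.univ.erase m, c k m * c k i := by
    intro k
    rw [hg]
    rw [integral_finset_sum _ fun m _ => integrable_finset_sum _ fun j _ => hterm_int k m j]
    have hmj_val : ∀ m j : Fin M, (∫ x : Fin M → ℝ, c k m * c k j *
        (Real.cos (x m) * Real.cos (x j) + Real.sin (x m) * Real.sin (x j))
        ∂(Measure.pi fun _ => μ0))
        = if m = j then c k m ^ 2 else c k m * c k j * s ^ 2 := by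
      intro m j
      rw [integral_const_mul]
      by_cases hmj : m = j
      · subst hmj
        rw [if_pos rfl]
        have e1 : (∫ x : Fin M → ℝ, (Real.cos (x m) * Real.cos (x m)
            + Real.sin (x m) * Real.sin (x m)) ∂(Measure.pi fun _ => μ0)) = 1 := by
          have : ∀ x : Fin M → ℝ, Real.cos (x m) * Real.cos (x m)
              + Real.sin (x m) * Real.sin (x m) = 1 := by
            intro x
            rw [← Real.cos_sq_add_sin_sq (x m)]
            ring
          rw [integral_congr_ae (Filter.Eventually.of_forall this)]
          simp
        rw [e1]
        ring
      · rw [if_neg hmj]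
        rw [integral_add
          (my_integrable_eval_two μ0 hmj (my_integrable_smul Real.continuous_cos hδ)
            (my_integrable_smul Real.continuous_cos hδ))
          (my_integrable_eval_two μ0 hmj (my_integrable_smul Real.continuous_sin hδ)
            (my_integrable_smul Real.continuous_sin hδ))]
        rw [my_integral_eval_two μ0 hmj Real.cos Real.cos,
          my_integral_eval_two μ0 hmj Real.sin Real.sin,
          my_int_cos hδ, my_int_sin hδ]
        rw [hs]
        ring
    rw [Finset.sum_congr rfl fun m (_ : m ∈ Finset.univ) =>
      integral_finset_sum Finset.univ fun j _ => hterm_int k m j]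
    rw [Finset.sum_congr rfl fun m _ => Finset.sum_congr rfl fun j _ => hmj_val m j]
    have : ∀ m : Fin M, (∑ j, if m = j then c k m ^ 2 else c k m * c k j * s ^ 2)
        = c k m ^ 2 + s ^ 2 * ∑ j ∈ Finset.univ.erase m, c k m * c k j := by
      intro m
      rw [← Finset.add_sum_erase _ _ (Finset.mem_univ m), if_pos rfl]
      congr 1
      rw [Finset.mul_sum]
      refine Finset.sum_congr rfl fun j hj => ?_
      rw [if_neg (Ne.symm (Finset.mem_erase.1 hj).1)]
      ring
    rw [Finset.sum_congr rfl fun m _ => this m]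
    rw [Finset.sum_add_distrib, ← Finset.mul_sum]
  -- put it together
  rw [integral_finset_sum _ fun k _ =>
    my_integrable_eval_one (Measure.pi fun _ => μ0) k (hg_int k)]
  refine Finset.sum_congr rfl fun k _ => ?_
  rw [my_integral_eval_one (Measure.pi fun _ => μ0) k (g k), hg_val k]
end

section
/- Fix a natural number b and set δ = π/2^b. For each M, let μ_M be the product measure on (Fin M → ℝ) whose factors are the uniform probability measure on [−δ, δ]. Then (1/M²) · ∫ |∑_{m} exp(i Δ_m)|² dμ_M(Δ) tends to ((2^b/π) · sin(π/2^b))² as M → ∞. In particular the expected power ∫ |∑_{m} exp(i Δ_m)|² dμ_M grows quadratically in M. -/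
open Real Complex Finset MeasureTheory Filter

section Aux

lemma integral_pi_prod' {α : Type*} [MeasurableSpace α] (μ : Measure α) [SigmaFinite μ]
    {M : ℕ} (F : Fin M → α → ℝ) :
    ∫ x : Fin M → α, ∏ i, F i (x i) ∂(Measure.pi fun _ => μ) = ∏ i, ∫ x, F i x ∂μ := by
  letI : MeasureSpace α := ⟨μ⟩
  exact MeasureTheory.integral_fintype_prod_eq_prod F

lemma integrable_of_bounded' {α : Type*} [MeasurableSpace α] {μ : Measure α}
    [IsFiniteMeasure μ] {f : α → ℝ} (hf : AEStronglyMeasurable f μ) (C : ℝ)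
    (h : ∀ x, |f x| ≤ C) : Integrable f μ :=
  Integrable.mono' (integrable_const C) hf (Filter.Eventually.of_forall h)

lemma prod_two_special {β : Type*} [CommMonoid β] {M : ℕ} {m n : Fin M} (hmn : m ≠ n)
    (u v : Fin M → β) :
    ∏ i, (if i = m then u i else if i = n then v i else 1) = u m * v n := by
  rw [← Finset.mul_prod_erase Finset.univ _ (Finset.mem_univ m)]
  rw [← Finset.mul_prod_erase _ _ (Finset.mem_erase.2 ⟨hmn.symm, Finset.mem_univ n⟩)]
  rw [if_pos rfl, if_neg hmn.symm, if_pos rfl]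
  rw [Finset.prod_eq_one, mul_one]
  intro i hi
  simp only [Finset.mem_erase] at hi
  rw [if_neg hi.2.1, if_neg hi.1]

lemma integral_eval_mul_eval {α : Type*} [MeasurableSpace α] (μ : Measure α)
    [IsProbabilityMeasure μ] {M : ℕ} {m n : Fin M} (hmn : m ≠ n) (f g : α → ℝ) :
    ∫ x : Fin M → α, f (x m) * g (x n) ∂(Measure.pi fun _ => μ)
      = (∫ x, f x ∂μ) * ∫ x, g x ∂μ := by
  have h1 : ∀ x : Fin M → α, f (x m) * g (x n)
      = ∏ i, (fun i : Fin M => if i = m then f else if i = n then g else fun _ => (1:ℝ)) i (x i) := by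
    intro x
    rw [← prod_two_special hmn (fun i => f (x i)) (fun i => g (x i))]
    refine Finset.prod_congr rfl fun i _ => ?_
    by_cases h : i = m
    · simp [h]
    · by_cases h' : i = n <;> simp [h, h', hmn.symm]
  simp only [h1]
  rw [integral_pi_prod']
  rw [← prod_two_special hmn (fun _ => ∫ x, f x ∂μ) (fun _ => ∫ x, g x ∂μ)]
  refine Finset.prod_congr rfl fun i _ => ?_
  by_cases h : i = m
  · simp [h]
  · by_cases h' : i = n <;> simp [h, h', hmn.symm]

/-- Key integral computation. -/
lemma expected_power (μ : Measure ℝ) [IsProbabilityMeasure μ] (M : ℕ)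
    (hs : ∫ x, Real.sin x ∂μ = 0) (c : ℝ) (hc : ∫ x, Real.cos x ∂μ = c) :
    ∫ Δ : Fin M → ℝ, ‖∑ m, Complex.exp ((Δ m : ℂ) * Complex.I)‖ ^ 2
      ∂(Measure.pi fun _ => μ) = M + ((M:ℝ)^2 - M) * c^2 := by
  have hpt : ∀ Δ : Fin M → ℝ,
      ‖∑ m, Complex.exp ((Δ m : ℂ) * Complex.I)‖ ^ 2
        = ∑ p : Fin M × Fin M, Real.cos (Δ p.1 - Δ p.2) := by
    intro Δ
    rw [Complex.sq_norm, Complex.normSq_apply]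
    simp only [Complex.re_sum, Complex.im_sum]
    simp only [Complex.exp_ofReal_mul_I_re, Complex.exp_ofReal_mul_I_im]
    rw [Fintype.sum_mul_sum, Fintype.sum_mul_sum, ← Finset.sum_add_distrib,
      Fintype.sum_prod_type]
    refine Finset.sum_congr rfl fun m _ => ?_
    rw [← Finset.sum_add_distrib]
    refine Finset.sum_congr rfl fun n _ => ?_
    rw [Real.cos_sub]
  simp only [hpt]
  have hmeas : ∀ p : Fin M × Fin M,
      AEStronglyMeasurable (fun Δ : Fin M → ℝ => Real.cos (Δ p.1 - Δ p.2))
        (Measure.pi fun _ => μ) := by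
    intro p
    exact (Real.continuous_cos.comp ((continuous_apply p.1).sub (continuous_apply p.2))).aestronglyMeasurable
  have hint : ∀ p : Fin M × Fin M,
      Integrable (fun Δ : Fin M → ℝ => Real.cos (Δ p.1 - Δ p.2)) (Measure.pi fun _ => μ) :=
    fun p => integrable_of_bounded' (hmeas p) 1 (fun x => Real.abs_cos_le_one _)
  rw [integral_finset_sum _ (fun p _ => hint p)]
  have hval : ∀ p : Fin M × Fin M,
      ∫ Δ : Fin M → ℝ, Real.cos (Δ p.1 - Δ p.2) ∂(Measure.pi fun _ => μ)
        = if p.1 = p.2 then 1 else c^2 := by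
    rintro ⟨m, n⟩
    by_cases h : m = n
    · simp only [h, if_pos rfl, sub_self, Real.cos_zero]
      simp
    · rw [if_neg h]
      have : (fun Δ : Fin M → ℝ => Real.cos (Δ m - Δ n))
          = fun Δ => Real.cos (Δ m) * Real.cos (Δ n) + Real.sin (Δ m) * Real.sin (Δ n) := by
        funext Δ; rw [Real.cos_sub]
      rw [this]
      have hcc : Integrable (fun Δ : Fin M → ℝ => Real.cos (Δ m) * Real.cos (Δ n))
          (Measure.pi fun _ => μ) := by
        refine integrable_of_bounded' ?_ 1 ?_
        · exact ((Real.continuous_cos.comp (continuous_apply m)).mul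
            (Real.continuous_cos.comp (continuous_apply n))).aestronglyMeasurable
        · intro x
          rw [abs_mul]
          exact mul_le_one₀ (Real.abs_cos_le_one _) (abs_nonneg _) (Real.abs_cos_le_one _)
      have hss : Integrable (fun Δ : Fin M → ℝ => Real.sin (Δ m) * Real.sin (Δ n))
          (Measure.pi fun _ => μ) := by
        refine integrable_of_bounded' ?_ 1 ?_
        · exact ((Real.continuous_sin.comp (continuous_apply m)).mul
            (Real.continuous_sin.comp (continuous_apply n))).aestronglyMeasurable
        · intro x
          rw [abs_mul]
          exact mul_le_one₀ (Real.abs_sin_le_one _) (abs_nonneg _) (Real.abs_sin_le_one _)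
      rw [integral_add hcc hss, integral_eval_mul_eval μ h Real.cos Real.cos,
        integral_eval_mul_eval μ h Real.sin Real.sin, hc, hs]
      ring
  rw [Finset.sum_congr rfl (fun p _ => hval p)]
  have hsplit : ∀ p : Fin M × Fin M, (if p.1 = p.2 then (1:ℝ) else c^2)
      = c^2 + if p.1 = p.2 then 1 - c^2 else 0 := by
    intro p; split_ifs <;> ring
  simp only [hsplit]
  rw [Finset.sum_add_distrib, Finset.sum_const, Fintype.sum_prod_type]
  simp only [Finset.sum_ite_eq, Finset.mem_univ, if_true, Finset.sum_const,
    Finset.card_univ, Fintype.card_prod, Fintype.card_fin, smul_eq_mul, nsmul_eq_mul]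
  push_cast
  ring

end Aux

lemma uniform_isProb {δ : ℝ} (hδ : 0 < δ) :
    IsProbabilityMeasure ((ENNReal.ofReal (2 * δ))⁻¹ • volume.restrict (Set.Icc (-δ) δ)) := by
  constructor
  rw [Measure.smul_apply, Measure.restrict_apply MeasurableSet.univ, Set.univ_inter,
    Real.volume_Icc, smul_eq_mul, show δ - -δ = 2 * δ by ring]
  exact ENNReal.inv_mul_cancel (ENNReal.ofReal_pos.2 (by linarith)).ne' ENNReal.ofReal_ne_top

lemma uniform_integral_smul {δ : ℝ} (hδ : 0 < δ) (f : ℝ → ℝ) :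
    ∫ x, f x ∂((ENNReal.ofReal (2 * δ))⁻¹ • volume.restrict (Set.Icc (-δ) δ))
      = (2 * δ)⁻¹ * ∫ x in Set.Icc (-δ) δ, f x := by
  rw [integral_smul_measure, ENNReal.toReal_inv, ENNReal.toReal_ofReal (by linarith),
    smul_eq_mul]

/-- Power scaling law with `b`-bit phase shifters: with `δ = π/2^b` and i.i.d. uniform
phase errors on `[-δ, δ]`, the normalized expected power `(1/M²) · E |∑ m, exp(i Δ m)|²`
tends to `((2^b/π) · sin(π/2^b))²` as `M → ∞`. -/
theorem power_scaling_law (b : ℕ) :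
    Tendsto
      (fun M : ℕ =>
        (1 / (M : ℝ) ^ 2) *
          ∫ Δ : Fin M → ℝ,
            ‖∑ m, Complex.exp ((Δ m : ℂ) * Complex.I)‖ ^ 2
          ∂(Measure.pi fun _ : Fin M =>
              (ENNReal.ofReal (2 * (π / 2 ^ b)))⁻¹ •
                volume.restrict (Set.Icc (-(π / 2 ^ b)) (π / 2 ^ b))))
      atTop (nhds ((2 ^ b / π * Real.sin (π / 2 ^ b)) ^ 2)) := by
  set δ : ℝ := π / 2 ^ b with hδdef
  have hδ : 0 < δ := by rw [hδdef]; positivity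
  set μ : Measure ℝ := (ENNReal.ofReal (2 * δ))⁻¹ • volume.restrict (Set.Icc (-δ) δ) with hμ
  haveI : IsProbabilityMeasure μ := uniform_isProb hδ
  set c : ℝ := 2 ^ b / π * Real.sin δ with hcdef
  have hsin : ∫ x, Real.sin x ∂μ = 0 := by
    rw [hμ, uniform_integral_smul hδ, MeasureTheory.integral_Icc_eq_integral_Ioc,
      ← intervalIntegral.integral_of_le (by linarith), integral_sin, Real.cos_neg, sub_self,
      mul_zero]
  have hcos : ∫ x, Real.cos x ∂μ = c := by
    rw [hμ, uniform_integral_smul hδ, MeasureTheory.integral_Icc_eq_integral_Ioc,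
      ← intervalIntegral.integral_of_le (by linarith), integral_cos, Real.sin_neg,
      sub_neg_eq_add, hcdef, hδdef]
    have hπ : (π : ℝ) ≠ 0 := Real.pi_ne_zero
    have h2 : ((2:ℝ) ^ b) ≠ 0 := by positivity
    field_simp
    ring
  have key : ∀ M : ℕ,
      ∫ Δ : Fin M → ℝ, ‖∑ m, Complex.exp ((Δ m : ℂ) * Complex.I)‖ ^ 2
        ∂(Measure.pi fun _ => μ) = M + ((M:ℝ)^2 - M) * c^2 :=
    fun M => expected_power μ M hsin c hcos
  have lim : Tendsto (fun M : ℕ => c^2 + (1 - c^2) / M) atTop (nhds (c^2)) := by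
    have h0 := tendsto_const_div_atTop_nhds_zero_nat (1 - c^2)
    simpa using tendsto_const_nhds.add h0
  refine Tendsto.congr' ?_ lim
  filter_upwards [eventually_ge_atTop 1] with M hM
  rw [key M]
  have hM0 : (M : ℝ) ≠ 0 := Nat.cast_ne_zero.2 (by omega)
  field_simp
  ring
end
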